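/- For any vector u* ∈ ℝ^d with ‖u*‖ = 1 and any matrix U ∈ ℝ^{d×r'}, writing r = Uᵀu* and E = (I - u* u*ᵀ)U, one has the exact identity ‖UUᵀ - u* u*ᵀ‖_F² = (1 - ‖r‖²)² + 2‖E r‖² + ‖E Eᵀ‖_F², and consequently ‖UUᵀ - u* u*ᵀ‖_F² ≤ (1 - ‖r‖²)² + 2‖E‖²‖r‖² + ‖E‖_F⁴. -/

import Mathlib

open scoped Matrix

noncomputable def frobInner {d e : ℕ} (X Y : Matrix (Fin d) (Fin e) ℝ) : ℝ :=
  ∑ i, ∑ j, X i j * Y i j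

noncomputable def frobNorm {d e : ℕ} (X : Matrix (Fin d) (Fin e) ℝ) : ℝ :=
  Real.sqrt (frobInner X X)

noncomputable def vecNorm {d : ℕ} (x : Fin d → ℝ) : ℝ :=
  Real.sqrt (∑ i, x i ^ 2)

noncomputable def specNorm {d e : ℕ} (M : Matrix (Fin d) (Fin e) ℝ) : ℝ :=
  ‖LinearMap.toContinuousLinearMap (Matrix.toEuclideanLin M)‖

lemma frobNorm_sq {d e : ℕ} (X : Matrix (Fin d) (Fin e) ℝ) :
    frobNorm X ^ 2 = ∑ i, ∑ j, X i j ^ 2 := by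
  unfold frobNorm frobInner
  rw [Real.sq_sqrt (Finset.sum_nonneg fun i _ => Finset.sum_nonneg fun j _ => mul_self_nonneg (X i j))]
  simp [sq]

lemma vecNorm_sq {n : ℕ} (x : Fin n → ℝ) : vecNorm x ^ 2 = ∑ i, x i ^ 2 := by
  unfold vecNorm
  exact Real.sq_sqrt (Finset.sum_nonneg fun i _ => sq_nonneg _)

lemma vecNorm_nonneg {n : ℕ} (x : Fin n → ℝ) : 0 ≤ vecNorm x := Real.sqrt_nonneg _

lemma euclid_norm_eq {n : ℕ} (v : Fin n → ℝ) :
    ‖(WithLp.equiv 2 (Fin n → ℝ)).symm v‖ = vecNorm v := by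
  rw [EuclideanSpace.norm_eq]
  unfold vecNorm
  congr 1
  exact Finset.sum_congr rfl fun i _ => by simp [Real.norm_eq_abs, sq_abs]

theorem error_signal_decomposition
    {d r' : ℕ} (ustar : Fin d → ℝ) (hu : vecNorm ustar = 1)
    (U : Matrix (Fin d) (Fin r') ℝ)
    (r : Fin r' → ℝ) (hr : r = Uᵀ.mulVec ustar)
    (E : Matrix (Fin d) (Fin r') ℝ)
    (hE : E = (1 - Matrix.vecMulVec ustar ustar) * U) :
    frobNorm (U * Uᵀ - Matrix.vecMulVec ustar ustar) ^ 2
      = (1 - vecNorm r ^ 2) ^ 2 + 2 * vecNorm (E.mulVec r) ^ 2 + frobNorm (E * Eᵀ) ^ 2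
    ∧ frobNorm (U * Uᵀ - Matrix.vecMulVec ustar ustar) ^ 2
      ≤ (1 - vecNorm r ^ 2) ^ 2 + 2 * specNorm E ^ 2 * vecNorm r ^ 2 + frobNorm E ^ 4 := by
  classical
  set a : Fin d → ℝ := E.mulVec r with ha
  set s : ℝ := ∑ k, r k ^ 2 with hs
  have hA : (∑ i, ustar i ^ 2) = 1 := by
    have h := vecNorm_sq ustar
    rw [hu] at h; linarith [h]
  have hrk : ∀ k, r k = ∑ i, U i k * ustar i := by
    intro k; rw [hr]
    simp [Matrix.mulVec, dotProduct, Matrix.transpose_apply]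
  have hE' : ∀ i k, E i k = U i k - ustar i * r k := by
    intro i k
    rw [hE]
    simp only [Matrix.mul_apply, Matrix.sub_apply, Matrix.vecMulVec_apply, Matrix.one_apply,
      sub_mul, Finset.sum_sub_distrib, ite_mul, one_mul, zero_mul, Finset.sum_ite_eq,
      Finset.mem_univ, if_true]
    rw [hrk k, Finset.mul_sum]
    congr 1
    exact Finset.sum_congr rfl fun m _ => by ring
  have hEu : ∀ k, ∑ i, ustar i * E i k = 0 := by
    intro k
    have h1 : ∑ i, ustar i * E i k
        = (∑ i, U i k * ustar i) - (∑ i, ustar i ^ 2) * r k := by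
      simp only [hE', mul_sub, Finset.sum_sub_distrib, Finset.sum_mul]
      congr 1
      · exact Finset.sum_congr rfl fun i _ => mul_comm _ _
      · exact Finset.sum_congr rfl fun i _ => by ring
    rw [h1, hA, ← hrk k]; ring
  have haa : ∀ i, a i = (∑ k, U i k * r k) - ustar i * s := by
    intro i
    simp only [ha, Matrix.mulVec, dotProduct, hE', hs]
    rw [Finset.mul_sum, ← Finset.sum_sub_distrib]
    exact Finset.sum_congr rfl fun k _ => by ring
  have hB : ∑ i, ustar i * a i = 0 := by
    simp only [ha, Matrix.mulVec, dotProduct, Finset.mul_sum]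
    rw [Finset.sum_comm]
    refine Finset.sum_eq_zero fun k _ => ?_
    have h1 : ∑ i, ustar i * (E i k * r k) = (∑ i, ustar i * E i k) * r k := by
      rw [Finset.sum_mul]; exact Finset.sum_congr rfl fun i _ => by ring
    rw [h1, hEu k, zero_mul]
  have hC : vecNorm a ^ 2 = ∑ i, a i ^ 2 := vecNorm_sq a
  set C : ℝ := ∑ i, a i ^ 2 with hCdef
  -- entrywise formula for the error matrix
  have hM : ∀ i j, (U * Uᵀ - Matrix.vecMulVec ustar ustar) i j
      = (s - 1) * ustar i * ustar j + ustar i * a j + a i * ustar j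
        + ∑ k, E i k * E j k := by
    intro i j
    have h1 : (U * Uᵀ - Matrix.vecMulVec ustar ustar) i j
        = (∑ k, U i k * U j k) - ustar i * ustar j := by
      simp [Matrix.mul_apply, Matrix.sub_apply, Matrix.vecMulVec_apply, Matrix.transpose_apply]
    have hexp : ∑ k, E i k * E j k
        = (∑ k, U i k * U j k) - ustar j * (∑ k, U i k * r k)
          - ustar i * (∑ k, U j k * r k) + ustar i * ustar j * s := by
      simp only [hE', hs]
      rw [Finset.mul_sum, Finset.mul_sum, Finset.mul_sum,
        ← Finset.sum_sub_distrib, ← Finset.sum_sub_distrib, ← Finset.sum_add_distrib]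
      exact Finset.sum_congr rfl fun k _ => by ring
    rw [h1, hexp, haa i, haa j]; ring
  -- cross terms vanish
  have key : ∀ w : Fin d → ℝ,
      ∑ i, ∑ j, (ustar i * w j) * (∑ k, E i k * E j k) = 0 := by
    intro w
    have h1 : ∀ i j : Fin d, (ustar i * w j) * (∑ k, E i k * E j k)
        = ∑ k, (ustar i * E i k) * (w j * E j k) := by
      intro i j; rw [Finset.mul_sum]
      exact Finset.sum_congr rfl fun k _ => by ring
    simp only [h1]
    rw [Finset.sum_comm]
    refine Finset.sum_eq_zero fun j _ => ?_
    rw [Finset.sum_comm]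
    refine Finset.sum_eq_zero fun k _ => ?_
    rw [← Finset.sum_mul, hEu k, zero_mul]
  have key2 : ∑ i, ∑ j, (a i * ustar j) * (∑ k, E i k * E j k) = 0 := by
    rw [Finset.sum_comm]
    refine Eq.trans ?_ (key a)
    refine Finset.sum_congr rfl fun j _ => Finset.sum_congr rfl fun i _ => ?_
    have hsymm : (∑ k, E i k * E j k) = ∑ k, E j k * E i k :=
      Finset.sum_congr rfl fun k _ => mul_comm _ _
    rw [hsymm]; ring
  -- sum of squares of the "N" part
  have hNi : ∀ i, ∑ j, ((s - 1) * ustar i * ustar j + ustar i * a j + a i * ustar j) ^ 2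
      = (s - 1) ^ 2 * ustar i ^ 2 + ustar i ^ 2 * C + a i ^ 2 + 2 * (s - 1) * (ustar i * a i) := by
    intro i
    have h1 : ∀ j, ((s - 1) * ustar i * ustar j + ustar i * a j + a i * ustar j) ^ 2
        = ((s - 1) ^ 2 * ustar i ^ 2 + a i ^ 2 + 2 * (s - 1) * (ustar i * a i)) * (ustar j ^ 2)
          + (ustar i ^ 2) * (a j ^ 2)
          + (2 * ustar i * a i + 2 * (s - 1) * ustar i ^ 2) * (ustar j * a j) := by
      intro j; ring
    simp only [h1, Finset.sum_add_distrib, ← Finset.mul_sum]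
    rw [hA, hB, ← hCdef]; ring
  have hNN : ∑ i, ∑ j, ((s - 1) * ustar i * ustar j + ustar i * a j + a i * ustar j) ^ 2
      = (s - 1) ^ 2 + 2 * C := by
    simp only [hNi]
    have h1 : ∀ i, (s - 1) ^ 2 * ustar i ^ 2 + ustar i ^ 2 * C + a i ^ 2
        + 2 * (s - 1) * (ustar i * a i)
        = ((s - 1) ^ 2 + C) * (ustar i ^ 2) + a i ^ 2 + (2 * (s - 1)) * (ustar i * a i) := by
      intro i; ring
    simp only [h1, Finset.sum_add_distrib, ← Finset.mul_sum]
    rw [hA, hB, ← hCdef]; ring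
  have hNT : ∑ i, ∑ j, ((s - 1) * ustar i * ustar j + ustar i * a j + a i * ustar j)
      * (∑ k, E i k * E j k) = 0 := by
    have h1 : ∀ i j, ((s - 1) * ustar i * ustar j + ustar i * a j + a i * ustar j)
        * (∑ k, E i k * E j k)
        = (s - 1) * ((ustar i * ustar j) * (∑ k, E i k * E j k))
          + (ustar i * a j) * (∑ k, E i k * E j k)
          + (a i * ustar j) * (∑ k, E i k * E j k) := by
      intro i j; ring
    simp only [h1, Finset.sum_add_distrib, ← Finset.mul_sum]
    rw [key ustar, key a, key2]; ring
  have hTT : frobNorm (E * Eᵀ) ^ 2 = ∑ i, ∑ j, (∑ k, E i k * E j k) ^ 2 := by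
    rw [frobNorm_sq]
    simp [Matrix.mul_apply, Matrix.transpose_apply]
  -- main identity
  have hmain : frobNorm (U * Uᵀ - Matrix.vecMulVec ustar ustar) ^ 2
      = (1 - s) ^ 2 + 2 * C + ∑ i, ∑ j, (∑ k, E i k * E j k) ^ 2 := by
    rw [frobNorm_sq]
    have h1 : ∀ i j, (U * Uᵀ - Matrix.vecMulVec ustar ustar) i j ^ 2
        = ((s - 1) * ustar i * ustar j + ustar i * a j + a i * ustar j) ^ 2
          + 2 * (((s - 1) * ustar i * ustar j + ustar i * a j + a i * ustar j)
              * (∑ k, E i k * E j k))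
          + (∑ k, E i k * E j k) ^ 2 := by
      intro i j; rw [hM i j]; ring
    simp only [h1, Finset.sum_add_distrib, ← Finset.mul_sum]
    rw [hNN, hNT]; ring
  have hid : frobNorm (U * Uᵀ - Matrix.vecMulVec ustar ustar) ^ 2
      = (1 - vecNorm r ^ 2) ^ 2 + 2 * vecNorm (E.mulVec r) ^ 2 + frobNorm (E * Eᵀ) ^ 2 := by
    rw [hmain, hTT, vecNorm_sq r, ← hs, ← ha, hC]
  refine ⟨hid, ?_⟩
  -- inequality part
  have hop : vecNorm a ≤ specNorm E * vecNorm r := by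
    have h := (LinearMap.toContinuousLinearMap (Matrix.toEuclideanLin E)).le_opNorm
      ((WithLp.equiv 2 (Fin r' → ℝ)).symm r)
    rw [LinearMap.coe_toContinuousLinearMap'] at h
    rw [Matrix.toEuclideanLin_apply] at h
    simp only [WithLp.equiv_symm_apply, WithLp.ofLp_toLp] at h
    rw [← euclid_norm_eq, ← euclid_norm_eq]
    simp only [WithLp.equiv_symm_apply]
    exact h
  have hC_le : C ≤ specNorm E ^ 2 * vecNorm r ^ 2 := by
    have h1 : vecNorm a ^ 2 ≤ (specNorm E * vecNorm r) ^ 2 := by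
      have := vecNorm_nonneg a
      nlinarith [hop]
    rw [hC] at h1
    calc C ≤ (specNorm E * vecNorm r) ^ 2 := h1
    _ = specNorm E ^ 2 * vecNorm r ^ 2 := by ring
  have hCS : (∑ i, ∑ j, (∑ k, E i k * E j k) ^ 2) ≤ frobNorm E ^ 4 := by
    have h1 : ∀ i j : Fin d, (∑ k, E i k * E j k) ^ 2
        ≤ (∑ k, E i k ^ 2) * (∑ k, E j k ^ 2) := fun i j =>
      Finset.sum_mul_sq_le_sq_mul_sq _ _ _
    have h2 : (∑ i, ∑ j, (∑ k, E i k * E j k) ^ 2)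
        ≤ ∑ i, ∑ j, (∑ k, E i k ^ 2) * (∑ k, E j k ^ 2) :=
      Finset.sum_le_sum fun i _ => Finset.sum_le_sum fun j _ => h1 i j
    have h3 : (∑ i, ∑ j, (∑ k, E i k ^ 2) * (∑ k, E j k ^ 2))
        = (∑ i, ∑ k, E i k ^ 2) ^ 2 := by
      rw [sq, Finset.sum_mul_sum]
    have h4 : frobNorm E ^ 4 = (∑ i, ∑ k, E i k ^ 2) ^ 2 := by
      rw [← frobNorm_sq E]; ring
    rw [h4, ← h3]; exact h2
  have hseq : vecNorm r ^ 2 = s := by rw [vecNorm_sq, hs]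
  rw [hmain]
  rw [hseq] at hC_le ⊢
  linarith [hC_le, hCS]
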